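/- Let I and O be vector sequences in R^d of equal size m > 0 with means μ_I, μ_O and suppose additionally ‖σ²_I‖ and ‖σ²_O‖ (componentwise variances) are bounded by some M, and ‖μ_O − μ_I‖ > L with L > 2√(2M). Then the combined (componentwise) variance satisfies ‖σ²_IO − (1/4)(μ_O − μ_I)⊙(μ_O − μ_I)‖ ≤ M, where ⊙ is the componentwise product; in particular the cross-batch mean separation term (1/4)(μ_O−μ_I)² dominates the combined variance. -/

import Mathlib

open scoped BigOperators

lemma sum_sq_shift {m : ℕ} (a : Fin m → ℝ) (c μ : ℝ)
    (hμ : μ = (m : ℝ)⁻¹ * ∑ i, a i) (hm : 0 < m) :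
    ∑ i, (a i - c) ^ 2 = (∑ i, (a i - μ) ^ 2) + m * (μ - c) ^ 2 := by
  have hm' : (m : ℝ) ≠ 0 := Nat.cast_ne_zero.mpr hm.ne'
  have hsum : ∑ i, (a i - μ) = 0 := by
    rw [Finset.sum_sub_distrib, Finset.sum_const, Finset.card_univ, Fintype.card_fin, hμ]
    rw [nsmul_eq_mul, ← mul_assoc, mul_inv_cancel₀ hm', one_mul, sub_self]
  have h : ∀ i, (a i - c) ^ 2 = (a i - μ) ^ 2 + 2 * (μ - c) * (a i - μ) + (μ - c) ^ 2 := by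
    intro i; ring
  simp_rw [h]
  rw [Finset.sum_add_distrib, Finset.sum_add_distrib, ← Finset.mul_sum, hsum,
    Finset.sum_const, Finset.card_univ, Fintype.card_fin]
  ring

/-- For faraway OODs the mixed-batch componentwise variance is dominated by the
mean-gap term: if the componentwise variances of `I` and `O` are bounded by `M`
and `‖μ_O - μ_I‖ > L > 2√(2M)`, then the combined componentwise variance
deviates from `(1/4)(μ_O - μ_I) ⊙ (μ_O - μ_I)` by at most `M`. -/
theorem mixed_variance_dominated_by_mean_gap (d m : ℕ) (hm : 0 < m) (M L : ℝ)
    (I O : Fin m → EuclideanSpace ℝ (Fin d))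
    (μI μO μIO σI2 σO2 σIO2 had : EuclideanSpace ℝ (Fin d))
    (hμI : μI = (m : ℝ)⁻¹ • ∑ i, I i)
    (hμO : μO = (m : ℝ)⁻¹ • ∑ i, O i)
    (hμIO : μIO = ((2 * m : ℝ))⁻¹ • ∑ i : Fin (m + m), Fin.append I O i)
    (hσI : ∀ j, σI2 j = (m : ℝ)⁻¹ * ∑ i, (I i j - μI j) ^ 2)
    (hσO : ∀ j, σO2 j = (m : ℝ)⁻¹ * ∑ i, (O i j - μO j) ^ 2)
    (hσIO : ∀ j, σIO2 j =
      ((2 * m : ℝ))⁻¹ * ∑ i : Fin (m + m), (Fin.append I O i j - μIO j) ^ 2)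
    (hhad : ∀ j, had j = (μO j - μI j) * (μO j - μI j))
    (hMI : ‖σI2‖ ≤ M) (hMO : ‖σO2‖ ≤ M)
    (hL : L > 2 * Real.sqrt (2 * M))
    (hfar : ‖μO - μI‖ > L) :
    ‖σIO2 - (1 / 4 : ℝ) • had‖ ≤ M := by
  have hm' : (m : ℝ) ≠ 0 := Nat.cast_ne_zero.mpr hm.ne'
  have key : σIO2 - (1 / 4 : ℝ) • had = (1 / 2 : ℝ) • σI2 + (1 / 2 : ℝ) • σO2 := by
    ext j
    have hμIj : μI j = (m : ℝ)⁻¹ * ∑ i, I i j := by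
      rw [hμI]; rw [PiLp.smul_apply, smul_eq_mul]
      congr 1; rw [WithLp.ofLp_sum]; exact Finset.sum_apply j Finset.univ _
    have hμOj : μO j = (m : ℝ)⁻¹ * ∑ i, O i j := by
      rw [hμO]; rw [PiLp.smul_apply, smul_eq_mul]
      congr 1; rw [WithLp.ofLp_sum]; exact Finset.sum_apply j Finset.univ _
    have happ : ∀ f : EuclideanSpace ℝ (Fin d) → ℝ,
        ∑ i : Fin (m + m), f (Fin.append I O i) =
          (∑ i : Fin m, f (I i)) + ∑ i : Fin m, f (O i) := by
      intro f
      rw [Fin.sum_univ_add]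
      simp only [Fin.append_left, Fin.append_right]
    have hμIOj : μIO j = (μI j + μO j) / 2 := by
      rw [hμIO]
      have : (∑ i : Fin (m + m), Fin.append I O i) j =
          (∑ i : Fin m, I i j) + ∑ i : Fin m, O i j := by
        rw [show (∑ i : Fin (m + m), Fin.append I O i) j
            = ∑ i : Fin (m + m), Fin.append I O i j from by rw [WithLp.ofLp_sum]; exact Finset.sum_apply j _ _]
        exact happ (fun v => v j)
      simp only [PiLp.smul_apply, smul_eq_mul, this, hμIj, hμOj, mul_inv]
      ring
    have hsIO : ∑ i : Fin (m + m), (Fin.append I O i j - μIO j) ^ 2 =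
        (∑ i : Fin m, (I i j - μIO j) ^ 2) + ∑ i : Fin m, (O i j - μIO j) ^ 2 :=
      happ (fun v => (v j - μIO j) ^ 2)
    have hI := sum_sq_shift (fun i => I i j) (μIO j) (μI j) hμIj hm
    have hO := sum_sq_shift (fun i => O i j) (μIO j) (μO j) hμOj hm
    simp only [PiLp.sub_apply, PiLp.add_apply, PiLp.smul_apply, smul_eq_mul]
    rw [hσIO, hhad, hσI, hσO, hsIO, hI, hO, hμIOj]
    field_simp
    ring
  rw [key]
  have h0 : 0 ≤ M := le_trans (norm_nonneg _) hMI
  calc ‖(1 / 2 : ℝ) • σI2 + (1 / 2 : ℝ) • σO2‖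
      ≤ ‖(1 / 2 : ℝ) • σI2‖ + ‖(1 / 2 : ℝ) • σO2‖ := norm_add_le _ _
    _ ≤ (1 / 2) * M + (1 / 2) * M := by
        rw [norm_smul, norm_smul]
        gcongr <;> simp
    _ = M := by ring
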